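/- For every ε > 0, the three functions N(t) := ∫_{ℝ⁴} Û_{ε,te₁}(x)⁴ dx, G(t) := ∫_{ℝ⁴} ∇U_{ε,te₁}(x)·∇U_{ε,−te₁}(x) dx and C(t) := ∫_{ℝ⁴} U_{ε,te₁}(x)²·U_{ε,−te₁}(x)² dx are differentiable at every t > 0 and satisfy the identity N'(t) = (8/S₄)·G'(t) + 6·C'(t). -/

import Mathlib

noncomputable section

open MeasureTheory Real RealInnerProductSpace

/-- Euclidean four-space. -/
abbrev E4 : Type := EuclideanSpace ℝ (Fin 4)

/-- The normalizing constant `c₄ = (6/π²)^(1/4)`. -/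
def c4 : ℝ := (6 / Real.pi ^ 2) ^ ((1 : ℝ) / 4)

/-- The Sobolev constant `S₄ = 8/c₄²`. -/
def S4 : ℝ := 8 / c4 ^ 2

/-- The standard (normalized) bubble `U(x) = c₄ (1+|x|²)⁻¹`. -/
def Ubub (x : E4) : ℝ := c4 * (1 + ‖x‖ ^ 2)⁻¹

/-- The rescaled/translated bubble `U_{ε,x₀}(x) = ε⁻¹ U((x - x₀)/ε)`. -/
def Ueps (ε : ℝ) (x₀ : E4) (x : E4) : ℝ := ε⁻¹ * Ubub (ε⁻¹ • (x - x₀))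

/-- The double bubble `Û_{ε,x₀} = U_{ε,x₀} + U_{ε,-x₀}`. -/
def Uhat (ε : ℝ) (x₀ : E4) (x : E4) : ℝ := Ueps ε x₀ x + Ueps ε (-x₀) x

/-- The first standard basis vector of `ℝ⁴`. -/
def e1 : E4 := EuclideanSpace.single (0 : Fin 4) (1 : ℝ)

/-- The Yamabe (Sobolev) quotient `Q(u) = 6 ∫ |∇u|² / (∫ u⁴)^{1/2}` on `ℝ⁴`. -/
def Qyam (u : E4 → ℝ) : ℝ :=
  6 * (∫ x : E4, ‖gradient u x‖ ^ 2) / Real.sqrt (∫ x : E4, (u x) ^ 4)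

/-- `N(t) = ∫ Û_{ε,te₁}⁴`. -/
def Nfun (ε t : ℝ) : ℝ := ∫ x : E4, Uhat ε (t • e1) x ^ 4

/-- `G(t) = ∫ ∇U_{ε,te₁} · ∇U_{ε,-te₁}`. -/
def Gfun (ε t : ℝ) : ℝ :=
  ∫ x : E4, ⟪gradient (Ueps ε (t • e1)) x, gradient (Ueps ε (-(t • e1))) x⟫

/-- `C(t) = ∫ U_{ε,te₁}² U_{ε,-te₁}²`. -/
def Cfun (ε t : ℝ) : ℝ := ∫ x : E4, Ueps ε (t • e1) x ^ 2 * Ueps ε (-(t • e1)) x ^ 2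

namespace Agh
open Filter Topology Metric
lemma c4_pos : 0 < c4 := by
  have : (0:ℝ) < 6 / Real.pi ^ 2 := by positivity
  exact Real.rpow_pos_of_pos this _
def q (ε : ℝ) (b x : E4) : ℝ := 1 + ε⁻¹ ^ 2 * ‖x - b‖ ^ 2
def u (ε : ℝ) (b : E4) (x : E4) : ℝ := ε⁻¹ * c4 * (q ε b x)⁻¹
def du (ε : ℝ) (b : E4) (i : Fin 4) (x : E4) : ℝ :=
  -2 * ε⁻¹ ^ 3 * c4 * ((q ε b x)⁻¹) ^ 2 * (x i - b i)
def ddu (ε : ℝ) (b : E4) (i : Fin 4) (x : E4) : ℝ :=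
  -2 * ε⁻¹ ^ 3 * c4 * ((q ε b x)⁻¹) ^ 2 + 8 * ε⁻¹ ^ 5 * c4 * ((q ε b x)⁻¹) ^ 3 * (x i - b i) ^ 2
lemma one_le_q (ε : ℝ) (b x : E4) : 1 ≤ q ε b x := by
  have : 0 ≤ ε⁻¹ ^ 2 * ‖x - b‖ ^ 2 := by positivity
  unfold q; linarith
lemma q_pos (ε : ℝ) (b x : E4) : 0 < q ε b x := lt_of_lt_of_le one_pos (one_le_q ε b x)
lemma q_ne (ε : ℝ) (b x : E4) : q ε b x ≠ 0 := (q_pos ε b x).ne'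
lemma u_eq_Ueps {ε : ℝ} (hε : 0 < ε) (b : E4) : Ueps ε b = u ε b := by
  funext x
  have h : ‖ε⁻¹ • (x - b)‖ ^ 2 = ε⁻¹ ^ 2 * ‖x - b‖ ^ 2 := by
    rw [norm_smul]
    rw [Real.norm_eq_abs, abs_of_pos (by positivity : (0:ℝ) < ε⁻¹)]
    ring
  simp only [Ueps, Ubub, u, q, h]
  ring

lemma norm_sq_eq_sum (x : E4) : ‖x‖ ^ 2 = ∑ i, (x i) ^ 2 := by
  rw [← real_inner_self_eq_norm_sq]
  simp only [PiLp.inner_apply, RCLike.inner_apply, conj_trivial, sq]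
lemma coord_sq_le (y : E4) (i : Fin 4) : (y i) ^ 2 ≤ ‖y‖ ^ 2 := by
  rw [norm_sq_eq_sum]
  exact Finset.single_le_sum (f := fun j => (y j)^2) (fun j _ => by positivity)
    (Finset.mem_univ i)
lemma norm_sub_sq_le {ε : ℝ} (hε : 0 < ε) (b x : E4) : ‖x - b‖ ^ 2 ≤ ε ^ 2 * q ε b x := by
  have h1 : ε ^ 2 * q ε b x = ε ^ 2 + ‖x - b‖ ^ 2 := by unfold q; field_simp
  rw [h1]; nlinarith [sq_nonneg ε]

def Dq (ε : ℝ) (b x : E4) : E4 →L[ℝ] ℝ := (2 * ε⁻¹ ^ 2) • innerSL ℝ (x - b)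

lemma hasFDerivAt_q (ε : ℝ) (b x : E4) : HasFDerivAt (q ε b) (Dq ε b x) x := by
  have h0 : HasFDerivAt (fun y : E4 => y - b) (ContinuousLinearMap.id ℝ E4) x :=
    (hasFDerivAt_id x).sub_const b
  have h1 := h0.norm_sq
  have h2 := (h1.const_mul (ε⁻¹ ^ 2)).const_add 1
  refine h2.congr_fderiv ?_
  ext v
  simp [Dq, real_inner_smul_left]
  ring

def Du (ε : ℝ) (b x : E4) : E4 →L[ℝ] ℝ :=
  (-2 * ε⁻¹ ^ 3 * c4 * ((q ε b x)⁻¹) ^ 2) • innerSL ℝ (x - b)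

lemma hasFDerivAt_u (ε : ℝ) (b x : E4) : HasFDerivAt (u ε b) (Du ε b x) x := by
  have hinv : HasFDerivAt (fun y => (q ε b y)⁻¹) ((-((q ε b x) ^ 2)⁻¹) • Dq ε b x) x :=
    (hasDerivAt_inv (q_ne ε b x)).comp_hasFDerivAt x (hasFDerivAt_q ε b x)
  have h := hinv.const_mul (ε⁻¹ * c4)
  refine h.congr_fderiv ?_
  ext v
  simp [Du, Dq, real_inner_smul_left]
  field_simp [q_ne ε b x]

lemma gradient_u (ε : ℝ) (b x : E4) :
    gradient (u ε b) x = (-2 * ε⁻¹ ^ 3 * c4 * ((q ε b x)⁻¹) ^ 2) • (x - b) := by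
  have h : HasGradientAt (u ε b) ((-2 * ε⁻¹ ^ 3 * c4 * ((q ε b x)⁻¹) ^ 2) • (x - b)) x := by
    rw [hasGradientAt_iff_hasFDerivAt]
    refine (hasFDerivAt_u ε b x).congr_fderiv ?_
    ext v
    simp [Du, real_inner_smul_left]
  exact h.gradient

def Ddu (ε : ℝ) (b : E4) (i : Fin 4) (x : E4) : E4 →L[ℝ] ℝ :=
  (8 * ε⁻¹ ^ 5 * c4 * ((q ε b x)⁻¹) ^ 3 * (x i - b i)) • innerSL ℝ (x - b) +
    (-2 * ε⁻¹ ^ 3 * c4 * ((q ε b x)⁻¹) ^ 2) • (EuclideanSpace.proj i : E4 →L[ℝ] ℝ)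

lemma hasFDerivAt_du (ε : ℝ) (b : E4) (i : Fin 4) (x : E4) :
    HasFDerivAt (du ε b i) (Ddu ε b i x) x := by
  have hinv : HasFDerivAt (fun y => (q ε b y)⁻¹) ((-((q ε b x) ^ 2)⁻¹) • Dq ε b x) x :=
    (hasDerivAt_inv (q_ne ε b x)).comp_hasFDerivAt x (hasFDerivAt_q ε b x)
  have hq2 : HasFDerivAt (fun y => ((q ε b y)⁻¹) ^ 2)
      ((2 * ((q ε b x)⁻¹) ^ 1) • ((-((q ε b x) ^ 2)⁻¹) • Dq ε b x)) x := by
    have hp := hasDerivAt_pow 2 ((q ε b x)⁻¹)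
    exact hp.comp_hasFDerivAt x hinv
  have hcoord : HasFDerivAt (fun y : E4 => y i - b i)
      ((EuclideanSpace.proj i : E4 →L[ℝ] ℝ)) x := by
    exact (EuclideanSpace.proj i : E4 →L[ℝ] ℝ).hasFDerivAt.sub_const (b i)
  have hmul := (hq2.mul hcoord).const_mul (-2 * ε⁻¹ ^ 3 * c4)
  have hfe : du ε b i = fun y => (-2 * ε⁻¹ ^ 3 * c4) * (((q ε b y)⁻¹) ^ 2 * (y i - b i)) := by
    funext y; unfold du; ring
  rw [hfe]
  refine hmul.congr_fderiv ?_
  ext v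
  simp [Ddu, Dq, real_inner_smul_left]
  field_simp [q_ne ε b x]
  ring

lemma Du_apply_single (ε : ℝ) (b x : E4) (i : Fin 4) :
    Du ε b x (EuclideanSpace.single i (1:ℝ)) = du ε b i x := by
  simp [Du, du, real_inner_smul_left, real_inner_comm, EuclideanSpace.inner_single_right]

lemma Ddu_apply_single (ε : ℝ) (b x : E4) (i : Fin 4) :
    Ddu ε b i x (EuclideanSpace.single i (1:ℝ)) = ddu ε b i x := by
  simp [Ddu, ddu, real_inner_smul_left, real_inner_comm, EuclideanSpace.inner_single_right]
  ring

lemma sum_ddu {ε : ℝ} (hε : 0 < ε) (b x : E4) :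
    ∑ i, ddu ε b i x = -S4 * (u ε b x) ^ 3 := by
  have hsum : ∑ i, (x i - b i) ^ 2 = ‖x - b‖ ^ 2 := by
    rw [norm_sq_eq_sum]
    apply Finset.sum_congr rfl
    intro i _
    simp
  have hnb : ‖x - b‖ ^ 2 = ε ^ 2 * (q ε b x - 1) := by
    unfold q
    field_simp
    ring
  unfold ddu
  rw [Finset.sum_add_distrib, Finset.sum_const, ← Finset.mul_sum, hsum, hnb]
  simp only [Finset.card_univ, Fintype.card_fin, nsmul_eq_mul, Nat.cast_ofNat]
  unfold u S4
  field_simp [q_ne ε b x, c4_pos.ne']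
  ring


/- ## chunk 3 : bounds -/

lemma abs_coord_le (y : E4) (i : Fin 4) : |y i| ≤ ‖y‖ :=
  le_of_pow_le_pow_left₀ two_ne_zero (norm_nonneg y) (by rw [sq_abs]; exact coord_sq_le y i)

lemma norm_sub_le_eps_q {ε : ℝ} (hε : 0 < ε) (b x : E4) : ‖x - b‖ ≤ ε * q ε b x := by
  have h1 := norm_sub_sq_le hε b x
  have h2 := one_le_q ε b x
  have h3 := q_pos ε b x
  have : ‖x - b‖ ^ 2 ≤ (ε * q ε b x) ^ 2 := by nlinarith
  exact le_of_pow_le_pow_left₀ two_ne_zero (by positivity) this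

def Kc (ε B : ℝ) : ℝ := (4 + 4 * B ^ 2) * max 1 (ε ^ 2)

lemma Kc_pos (ε B : ℝ) : 0 < Kc ε B := by
  have h1 : (0:ℝ) < 4 + 4 * B ^ 2 := by positivity
  have h2 : (0:ℝ) < max 1 (ε ^ 2) := lt_of_lt_of_le one_pos (le_max_left _ _)
  exact mul_pos h1 h2

lemma q_lower {ε B : ℝ} (hε : 0 < ε) {b : E4} (hb : ‖b‖ ≤ B) (x : E4) :
    (1 + ‖x‖) ^ 2 ≤ Kc ε B * q ε b x := by
  have hm1 : (1:ℝ) ≤ max 1 (ε ^ 2) := le_max_left _ _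
  have hm2 : ε ^ 2 ≤ max 1 (ε ^ 2) := le_max_right _ _
  have he : ε ^ 2 * ε⁻¹ ^ 2 = 1 := by field_simp
  have hn : ‖x‖ ≤ ‖x - b‖ + B := by
    calc ‖x‖ = ‖(x - b) + b‖ := by rw [sub_add_cancel]
    _ ≤ ‖x - b‖ + ‖b‖ := norm_add_le _ _
    _ ≤ ‖x - b‖ + B := by linarith
  have h0 : (0:ℝ) ≤ ‖x - b‖ := norm_nonneg _
  have h0' : (0:ℝ) ≤ ‖x‖ := norm_nonneg _
  have hB : (0:ℝ) ≤ B := le_trans (norm_nonneg b) hb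
  have key : Kc ε B * q ε b x ≥ (4 + 4 * B ^ 2) * (1 + ‖x - b‖ ^ 2) := by
    unfold Kc q
    have hs : (0:ℝ) ≤ ε⁻¹ ^ 2 * ‖x - b‖ ^ 2 := by positivity
    have : max 1 (ε ^ 2) * (1 + ε⁻¹ ^ 2 * ‖x - b‖ ^ 2) ≥ 1 + ‖x - b‖ ^ 2 := by
      have e1 : max 1 (ε ^ 2) * (1 + ε⁻¹ ^ 2 * ‖x - b‖ ^ 2)
          = max 1 (ε ^ 2) + max 1 (ε ^ 2) * (ε⁻¹ ^ 2 * ‖x - b‖ ^ 2) := by ring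
      have e2 : max 1 (ε ^ 2) * (ε⁻¹ ^ 2 * ‖x - b‖ ^ 2) ≥ ε ^ 2 * (ε⁻¹ ^ 2 * ‖x - b‖ ^ 2) := by
        apply mul_le_mul_of_nonneg_right hm2 (by positivity)
      have e3 : ε ^ 2 * (ε⁻¹ ^ 2 * ‖x - b‖ ^ 2) = ‖x - b‖ ^ 2 := by
        rw [← mul_assoc, he, one_mul]
      linarith
    nlinarith [this, sq_nonneg B]
  nlinarith [key, hn, sq_nonneg (‖x - b‖ - 1), sq_nonneg (B - 1), sq_nonneg (‖x - b‖ - B),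
    sq_nonneg (‖x - b‖ * B), h0, hB]

lemma q_inv_le {ε B : ℝ} (hε : 0 < ε) {b : E4} (hb : ‖b‖ ≤ B) (x : E4) :
    (q ε b x)⁻¹ ≤ Kc ε B * ((1 + ‖x‖) ^ 2)⁻¹ := by
  have h := q_lower hε hb x
  have hq := q_pos ε b x
  have ha : (0:ℝ) < (1 + ‖x‖) ^ 2 := by positivity
  have key : (q ε b x)⁻¹ * (1 + ‖x‖) ^ 2 ≤ Kc ε B := by
    rw [inv_mul_le_iff₀ hq]
    calc (1 + ‖x‖) ^ 2 ≤ Kc ε B * q ε b x := h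
      _ = q ε b x * Kc ε B := by ring
  rw [← div_eq_mul_inv, le_div_iff₀ ha]
  exact key

lemma q_inv_le_one (ε : ℝ) (b x : E4) : (q ε b x)⁻¹ ≤ 1 :=
  inv_le_one_of_one_le₀ (one_le_q ε b x)

lemma u_nonneg {ε : ℝ} (hε : 0 < ε) (b x : E4) : 0 ≤ u ε b x := by
  have hq := q_pos ε b x
  have hc4 := c4_pos
  unfold u
  positivity

lemma u_le_glob {ε : ℝ} (hε : 0 < ε) (b x : E4) : u ε b x ≤ ε⁻¹ * c4 := by
  unfold u
  have h := q_inv_le_one ε b x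
  have hc4 := c4_pos
  have h0 : (0:ℝ) ≤ ε⁻¹ * c4 := by positivity
  calc ε⁻¹ * c4 * (q ε b x)⁻¹ ≤ ε⁻¹ * c4 * 1 := mul_le_mul_of_nonneg_left h h0
    _ = ε⁻¹ * c4 := by ring

lemma u_le {ε B : ℝ} (hε : 0 < ε) {b : E4} (hb : ‖b‖ ≤ B) (x : E4) :
    u ε b x ≤ ε⁻¹ * c4 * Kc ε B * ((1 + ‖x‖) ^ 2)⁻¹ := by
  unfold u
  have hc4 := c4_pos
  have h := q_inv_le hε hb x
  have h2 : (0:ℝ) ≤ ε⁻¹ * c4 := by positivity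
  calc ε⁻¹ * c4 * (q ε b x)⁻¹ ≤ ε⁻¹ * c4 * (Kc ε B * ((1 + ‖x‖) ^ 2)⁻¹) := by
        apply mul_le_mul_of_nonneg_left h h2
    _ = ε⁻¹ * c4 * Kc ε B * ((1 + ‖x‖) ^ 2)⁻¹ := by ring

lemma du_le_q {ε : ℝ} (hε : 0 < ε) (b : E4) (i : Fin 4) (x : E4) :
    |du ε b i x| ≤ 2 * ε⁻¹ ^ 2 * c4 * (q ε b x)⁻¹ := by
  have hq := q_pos ε b x
  have hc := c4_pos
  have h1 : |du ε b i x| = 2 * ε⁻¹ ^ 3 * c4 * ((q ε b x)⁻¹) ^ 2 * |x i - b i| := by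
    unfold du
    rw [abs_mul]
    congr 1
    have hnn : (0:ℝ) ≤ 2 * ε⁻¹ ^ 3 * c4 * ((q ε b x)⁻¹) ^ 2 := by
      have hc4 := c4_pos
      positivity
    rw [abs_of_nonpos (by linarith)]
    ring
  rw [h1]
  have h2 : |x i - b i| ≤ ‖x - b‖ := by
    have h3 : x i - b i = (x - b) i := rfl
    rw [h3]
    exact abs_coord_le (x - b) i
  have h4 : ‖x - b‖ ≤ ε * q ε b x := norm_sub_le_eps_q hε b x
  have h5 : |x i - b i| ≤ ε * q ε b x := le_trans h2 h4
  have hinv : (0:ℝ) < ε⁻¹ := by positivity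
  calc 2 * ε⁻¹ ^ 3 * c4 * ((q ε b x)⁻¹) ^ 2 * |x i - b i|
      ≤ 2 * ε⁻¹ ^ 3 * c4 * ((q ε b x)⁻¹) ^ 2 * (ε * q ε b x) := by
        apply mul_le_mul_of_nonneg_left h5 (by positivity)
    _ = 2 * ε⁻¹ ^ 2 * c4 * (q ε b x)⁻¹ * (ε * ε⁻¹) * (q ε b x * (q ε b x)⁻¹) := by ring
    _ = 2 * ε⁻¹ ^ 2 * c4 * (q ε b x)⁻¹ := by
        rw [mul_inv_cancel₀ hε.ne', mul_inv_cancel₀ (q_ne ε b x)]; ring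

lemma du_le_glob {ε : ℝ} (hε : 0 < ε) (b : E4) (i : Fin 4) (x : E4) :
    |du ε b i x| ≤ 2 * ε⁻¹ ^ 2 * c4 := by
  refine le_trans (du_le_q hε b i x) ?_
  have h := q_inv_le_one ε b x
  have hc4 := c4_pos
  have h0 : (0:ℝ) ≤ 2 * ε⁻¹ ^ 2 * c4 := by positivity
  calc 2 * ε⁻¹ ^ 2 * c4 * (q ε b x)⁻¹ ≤ 2 * ε⁻¹ ^ 2 * c4 * 1 := mul_le_mul_of_nonneg_left h h0
    _ = 2 * ε⁻¹ ^ 2 * c4 := by ring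

lemma du_le {ε B : ℝ} (hε : 0 < ε) {b : E4} (hb : ‖b‖ ≤ B) (i : Fin 4) (x : E4) :
    |du ε b i x| ≤ 2 * ε⁻¹ ^ 2 * c4 * Kc ε B * ((1 + ‖x‖) ^ 2)⁻¹ := by
  refine le_trans (du_le_q hε b i x) ?_
  have hc4 := c4_pos
  have h := q_inv_le hε hb x
  have h2 : (0:ℝ) ≤ 2 * ε⁻¹ ^ 2 * c4 := by positivity
  calc 2 * ε⁻¹ ^ 2 * c4 * (q ε b x)⁻¹ ≤ 2 * ε⁻¹ ^ 2 * c4 * (Kc ε B * ((1 + ‖x‖) ^ 2)⁻¹) :=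
        mul_le_mul_of_nonneg_left h h2
    _ = 2 * ε⁻¹ ^ 2 * c4 * Kc ε B * ((1 + ‖x‖) ^ 2)⁻¹ := by ring

lemma ddu_le {ε : ℝ} (hε : 0 < ε) (b : E4) (i : Fin 4) (x : E4) :
    |ddu ε b i x| ≤ 10 * ε⁻¹ ^ 3 * c4 * ((q ε b x)⁻¹) ^ 2 := by
  have hq := q_pos ε b x
  have hc := c4_pos
  have hinv : (0:ℝ) < ε⁻¹ := by positivity
  have hc4 := c4_pos
  have h2 : (x i - b i) ^ 2 ≤ ε ^ 2 * q ε b x := by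
    have h2' := coord_sq_le (x - b) i
    have h3 : x i - b i = (x - b) i := rfl
    rw [h3]
    exact le_trans h2' (norm_sub_sq_le hε b x)
  have habs : |ddu ε b i x| ≤ 2 * ε⁻¹ ^ 3 * c4 * ((q ε b x)⁻¹) ^ 2
      + 8 * ε⁻¹ ^ 5 * c4 * ((q ε b x)⁻¹) ^ 3 * (x i - b i) ^ 2 := by
    unfold ddu
    refine le_trans (abs_add_le _ _) ?_
    have hnn : (0:ℝ) ≤ 2 * ε⁻¹ ^ 3 * c4 * ((q ε b x)⁻¹) ^ 2 := by positivity
    rw [abs_of_nonpos (by linarith), abs_of_nonneg (by positivity)]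
    ring_nf
    exact le_refl _
  refine le_trans habs ?_
  have h5 : 8 * ε⁻¹ ^ 5 * c4 * ((q ε b x)⁻¹) ^ 3 * (x i - b i) ^ 2
      ≤ 8 * ε⁻¹ ^ 3 * c4 * ((q ε b x)⁻¹) ^ 2 := by
    calc 8 * ε⁻¹ ^ 5 * c4 * ((q ε b x)⁻¹) ^ 3 * (x i - b i) ^ 2
        ≤ 8 * ε⁻¹ ^ 5 * c4 * ((q ε b x)⁻¹) ^ 3 * (ε ^ 2 * q ε b x) := by
          apply mul_le_mul_of_nonneg_left h2 (by positivity)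
      _ = 8 * ε⁻¹ ^ 3 * c4 * ((q ε b x)⁻¹) ^ 2 * ((ε * ε⁻¹) ^ 2 * (q ε b x * (q ε b x)⁻¹)) := by ring
      _ = 8 * ε⁻¹ ^ 3 * c4 * ((q ε b x)⁻¹) ^ 2 := by
          rw [mul_inv_cancel₀ hε.ne', mul_inv_cancel₀ (q_ne ε b x)]; ring
  linarith

/- ## chunk 4 : continuity and integrability -/

lemma cont_q (ε : ℝ) (b : E4) : Continuous (q ε b) := by
  unfold q
  exact continuous_const.add (continuous_const.mul
    (((continuous_id.sub continuous_const).norm).pow 2))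

lemma cont_qinv (ε : ℝ) (b : E4) : Continuous (fun x => (q ε b x)⁻¹) :=
  (cont_q ε b).inv₀ (fun x => q_ne ε b x)

lemma cont_u (ε : ℝ) (b : E4) : Continuous (u ε b) :=
  continuous_const.mul (cont_qinv ε b)

lemma cont_coord (b : E4) (i : Fin 4) : Continuous (fun x : E4 => x i - b i) :=
  ((EuclideanSpace.proj (𝕜 := ℝ) i).continuous).sub continuous_const

lemma cont_du (ε : ℝ) (b : E4) (i : Fin 4) : Continuous (du ε b i) := by
  unfold du
  exact (continuous_const.mul ((cont_qinv ε b).pow 2)).mul (cont_coord b i)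

lemma cont_ddu (ε : ℝ) (b : E4) (i : Fin 4) : Continuous (ddu ε b i) := by
  unfold ddu
  exact (continuous_const.mul ((cont_qinv ε b).pow 2)).add
    ((continuous_const.mul ((cont_qinv ε b).pow 3)).mul ((cont_coord b i).pow 2))

lemma decay_eq (x : E4) : ((1:ℝ) + ‖x‖) ^ (-(6:ℝ)) = (((1 + ‖x‖) ^ 2)⁻¹) ^ 3 := by
  have h : (0:ℝ) < 1 + ‖x‖ := by positivity
  rw [← Real.rpow_natCast (1 + ‖x‖) 2, ← Real.rpow_neg h.le, ← Real.rpow_natCast _ 3,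
    ← Real.rpow_mul h.le]
  norm_num

lemma int_decay : Integrable (fun x : E4 => (((1 + ‖x‖) ^ 2)⁻¹) ^ 3) := by
  have h : Integrable (fun x : E4 => (1 + ‖x‖) ^ (-(6:ℝ))) := by
    apply integrable_one_add_norm
    simp only [finrank_euclideanSpace_fin]
    norm_num
  exact h.congr (Filter.Eventually.of_forall (fun x => decay_eq x))

lemma int_decay_fn (C : ℝ) : Integrable (fun x : E4 => C * (((1 + ‖x‖) ^ 2)⁻¹) ^ 3) :=
  int_decay.const_mul C

lemma integrable_of_decay {F : E4 → ℝ} (hF : Continuous F) (C : ℝ)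
    (h : ∀ x, |F x| ≤ C * (((1 + ‖x‖) ^ 2)⁻¹) ^ 3) : Integrable F := by
  refine (int_decay_fn C).mono' hF.aestronglyMeasurable ?_
  exact Filter.Eventually.of_forall (fun x => by
    rw [Real.norm_eq_abs]; exact h x)

lemma abs_du_eq {ε : ℝ} (hε : 0 < ε) (b : E4) (i : Fin 4) (x : E4) :
    |du ε b i x| = 2 * ε⁻¹ ^ 3 * c4 * ((q ε b x)⁻¹) ^ 2 * |x i - b i| := by
  unfold du
  rw [abs_mul]
  congr 1
  have hc4 := c4_pos
  have hq := q_pos ε b x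
  have hnn : (0:ℝ) ≤ 2 * ε⁻¹ ^ 3 * c4 * ((q ε b x)⁻¹) ^ 2 := by positivity
  rw [abs_of_nonpos (by linarith)]
  ring

/-- The four-factor product bound. -/
lemma mul_le_mul4 {a b c d A B C D : ℝ} (ha : a ≤ A) (hb : b ≤ B) (hc : c ≤ C) (hd : d ≤ D)
    (h0a : 0 ≤ a) (h0b : 0 ≤ b) (h0c : 0 ≤ c) (h0d : 0 ≤ d)
    (h0B : 0 ≤ B) (h0C : 0 ≤ C) : a * b * c * d ≤ A * B * C * D := by
  have hA : 0 ≤ A := le_trans h0a ha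
  exact mul_le_mul (mul_le_mul (mul_le_mul ha hb h0b hA) hc h0c (mul_nonneg hA h0B)) hd h0d
    (mul_nonneg (mul_nonneg hA h0B) h0C)

lemma int_u_pow {ε : ℝ} (hε : 0 < ε) (b c : E4) (p r : ℕ) (hpr : p + r = 4) :
    Integrable (fun x => u ε b x ^ p * u ε c x ^ r) := by
  have hp4 : p = 4 - r := by omega
  have hr4 : r ≤ 4 := by omega
  subst hp4
  set B := max ‖b‖ ‖c‖ with hB
  have hbB : ‖b‖ ≤ B := le_max_left _ _
  have hcB : ‖c‖ ≤ B := le_max_right _ _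
  have hc4 := c4_pos
  have hK := Kc_pos ε B
  set Mg := ε⁻¹ * c4 with hMg
  set MK := ε⁻¹ * c4 * Kc ε B with hMK
  have hMg0 : 0 ≤ Mg := by positivity
  have hMK0 : 0 ≤ MK := by positivity
  apply integrable_of_decay
    (((cont_u ε b).pow _).mul ((cont_u ε c).pow _)) (Mg * MK ^ 3)
  intro x
  set v := ((1 + ‖x‖) ^ 2)⁻¹ with hv
  have hv0 : 0 ≤ v := by positivity
  have h0b : 0 ≤ u ε b x := u_nonneg hε b x
  have h0c : 0 ≤ u ε c x := u_nonneg hε c x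
  have h1b : u ε b x ≤ MK * v := u_le hε hbB x
  have h1c : u ε c x ≤ MK * v := u_le hε hcB x
  have h2b : u ε b x ≤ Mg := u_le_glob hε b x
  have h2c : u ε c x ≤ Mg := u_le_glob hε c x
  rw [Pi.mul_apply, Pi.pow_apply, Pi.pow_apply, abs_of_nonneg (by positivity)]
  have key : ∀ y z : ℝ, 0 ≤ y → 0 ≤ z → y ≤ MK * v → z ≤ MK * v → y ≤ Mg → z ≤ Mg →
      ∀ m : ℕ, m ≤ 4 → y ^ (4 - m) * z ^ m ≤ Mg * MK ^ 3 * v ^ 3 := by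
    intro y z h0y h0z hy hz hgy hgz m hm
    interval_cases m
    · calc y ^ 4 * z ^ 0 = y * y * y * y := by ring
        _ ≤ Mg * (MK * v) * (MK * v) * (MK * v) :=
          mul_le_mul4 hgy hy hy hy h0y h0y h0y h0y (by positivity) (by positivity)
        _ = Mg * MK ^ 3 * v ^ 3 := by ring
    · calc y ^ 3 * z ^ 1 = y * y * y * z := by ring
        _ ≤ Mg * (MK * v) * (MK * v) * (MK * v) :=
          mul_le_mul4 hgy hy hy hz h0y h0y h0y h0z (by positivity) (by positivity)
        _ = Mg * MK ^ 3 * v ^ 3 := by ring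
    · calc y ^ 2 * z ^ 2 = y * y * z * z := by ring
        _ ≤ Mg * (MK * v) * (MK * v) * (MK * v) :=
          mul_le_mul4 hgy hy hz hz h0y h0y h0z h0z (by positivity) (by positivity)
        _ = Mg * MK ^ 3 * v ^ 3 := by ring
    · calc y ^ 1 * z ^ 3 = y * z * z * z := by ring
        _ ≤ Mg * (MK * v) * (MK * v) * (MK * v) :=
          mul_le_mul4 hgy hz hz hz h0y h0z h0z h0z (by positivity) (by positivity)
        _ = Mg * MK ^ 3 * v ^ 3 := by ring
    · calc y ^ 0 * z ^ 4 = z * z * z * z := by ring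
        _ ≤ Mg * (MK * v) * (MK * v) * (MK * v) :=
          mul_le_mul4 hgz hz hz hz h0z h0z h0z h0z (by positivity) (by positivity)
        _ = Mg * MK ^ 3 * v ^ 3 := by ring
  exact key _ _ h0b h0c h1b h1c h2b h2c _ hr4

lemma int_dduu {ε : ℝ} (hε : 0 < ε) (b c : E4) (i : Fin 4) :
    Integrable (fun x => ddu ε b i x * u ε c x) := by
  set B := max ‖b‖ ‖c‖ with hB
  have hbB : ‖b‖ ≤ B := le_max_left _ _
  have hcB : ‖c‖ ≤ B := le_max_right _ _
  have hc4 := c4_pos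
  have hK := Kc_pos ε B
  apply integrable_of_decay ((cont_ddu ε b i).mul (cont_u ε c))
    ((10 * ε⁻¹ ^ 3 * c4 * (Kc ε B) ^ 2) * (ε⁻¹ * c4 * Kc ε B))
  intro x
  set v := ((1 + ‖x‖) ^ 2)⁻¹ with hv
  have hv0 : 0 ≤ v := by positivity
  have hqb := q_pos ε b x
  have hqc := q_pos ε c x
  have h1 : |ddu ε b i x| ≤ 10 * ε⁻¹ ^ 3 * c4 * ((q ε b x)⁻¹) ^ 2 := ddu_le hε b i x
  have h2 : |u ε c x| ≤ ε⁻¹ * c4 * Kc ε B * v := by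
    rw [abs_of_nonneg (u_nonneg hε c x)]
    exact u_le hε hcB x
  have h3 : (q ε b x)⁻¹ ≤ Kc ε B * v := q_inv_le hε hbB x
  have h4 : ((q ε b x)⁻¹) ^ 2 ≤ (Kc ε B * v) ^ 2 :=
    pow_le_pow_left₀ (by positivity) h3 2
  rw [Pi.mul_apply, abs_mul]
  calc |ddu ε b i x| * |u ε c x|
      ≤ (10 * ε⁻¹ ^ 3 * c4 * ((q ε b x)⁻¹) ^ 2) * (ε⁻¹ * c4 * Kc ε B * v) := by
        apply mul_le_mul h1 h2 (abs_nonneg _) (by positivity)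
    _ ≤ (10 * ε⁻¹ ^ 3 * c4 * (Kc ε B * v) ^ 2) * (ε⁻¹ * c4 * Kc ε B * v) := by
        have : (0:ℝ) ≤ ε⁻¹ * c4 * Kc ε B * v := by positivity
        apply mul_le_mul_of_nonneg_right _ this
        apply mul_le_mul_of_nonneg_left h4 (by positivity)
    _ = (10 * ε⁻¹ ^ 3 * c4 * (Kc ε B) ^ 2) * (ε⁻¹ * c4 * Kc ε B) * v ^ 3 := by ring

lemma int_dudu {ε : ℝ} (hε : 0 < ε) (b c : E4) (i : Fin 4) :
    Integrable (fun x => du ε b i x * du ε c i x) := by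
  set B := max ‖b‖ ‖c‖ with hB
  have hbB : ‖b‖ ≤ B := le_max_left _ _
  have hcB : ‖c‖ ≤ B := le_max_right _ _
  have hc4 := c4_pos
  have hK := Kc_pos ε B
  apply integrable_of_decay ((cont_du ε b i).mul (cont_du ε c i))
    (4 * ε⁻¹ ^ 4 * c4 ^ 2 * (Kc ε B) ^ 3)
  intro x
  set v := ((1 + ‖x‖) ^ 2)⁻¹ with hv
  have hv0 : 0 ≤ v := by positivity
  have hqb := q_pos ε b x
  have hqc := q_pos ε c x
  have hab : |x i - b i| ^ 2 ≤ ε ^ 2 * q ε b x := by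
    rw [sq_abs]
    have h2' := coord_sq_le (x - b) i
    have h3 : x i - b i = (x - b) i := rfl
    rw [h3]
    exact le_trans h2' (norm_sub_sq_le hε b x)
  have hac : |x i - c i| ^ 2 ≤ ε ^ 2 * q ε c x := by
    rw [sq_abs]
    have h2' := coord_sq_le (x - c) i
    have h3 : x i - c i = (x - c) i := rfl
    rw [h3]
    exact le_trans h2' (norm_sub_sq_le hε c x)
  have hxy : |x i - b i| * |x i - c i| ≤ (ε ^ 2 * q ε b x + ε ^ 2 * q ε c x) / 2 := by
    nlinarith [sq_nonneg (|x i - b i| - |x i - c i|), abs_nonneg (x i - b i),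
      abs_nonneg (x i - c i)]
  rw [Pi.mul_apply, abs_mul, abs_du_eq hε b i x, abs_du_eq hε c i x]
  have e1 : 2 * ε⁻¹ ^ 3 * c4 * ((q ε b x)⁻¹) ^ 2 * |x i - b i| *
      (2 * ε⁻¹ ^ 3 * c4 * ((q ε c x)⁻¹) ^ 2 * |x i - c i|)
      = (4 * ε⁻¹ ^ 6 * c4 ^ 2 * ((q ε b x)⁻¹) ^ 2 * ((q ε c x)⁻¹) ^ 2) *
        (|x i - b i| * |x i - c i|) := by ring
  rw [e1]
  have step1 : (4 * ε⁻¹ ^ 6 * c4 ^ 2 * ((q ε b x)⁻¹) ^ 2 * ((q ε c x)⁻¹) ^ 2) *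
      (|x i - b i| * |x i - c i|)
      ≤ (4 * ε⁻¹ ^ 6 * c4 ^ 2 * ((q ε b x)⁻¹) ^ 2 * ((q ε c x)⁻¹) ^ 2) *
        ((ε ^ 2 * q ε b x + ε ^ 2 * q ε c x) / 2) :=
    mul_le_mul_of_nonneg_left hxy (by positivity)
  refine le_trans step1 ?_
  have e2 : (4 * ε⁻¹ ^ 6 * c4 ^ 2 * ((q ε b x)⁻¹) ^ 2 * ((q ε c x)⁻¹) ^ 2) *
      ((ε ^ 2 * q ε b x + ε ^ 2 * q ε c x) / 2)
      = 2 * ε⁻¹ ^ 4 * c4 ^ 2 *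
        ((q ε b x)⁻¹ * ((q ε c x)⁻¹) ^ 2 + ((q ε b x)⁻¹) ^ 2 * (q ε c x)⁻¹) := by
    field_simp
    ring
  rw [e2]
  have h3b : (q ε b x)⁻¹ ≤ Kc ε B * v := q_inv_le hε hbB x
  have h3c : (q ε c x)⁻¹ ≤ Kc ε B * v := q_inv_le hε hcB x
  have t1 : (q ε b x)⁻¹ * ((q ε c x)⁻¹) ^ 2 ≤ (Kc ε B * v) * (Kc ε B * v) ^ 2 :=
    mul_le_mul h3b (pow_le_pow_left₀ (by positivity) h3c 2) (by positivity) (by positivity)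
  have t2 : ((q ε b x)⁻¹) ^ 2 * (q ε c x)⁻¹ ≤ (Kc ε B * v) ^ 2 * (Kc ε B * v) :=
    mul_le_mul (pow_le_pow_left₀ (by positivity) h3b 2) h3c (by positivity) (by positivity)
  calc 2 * ε⁻¹ ^ 4 * c4 ^ 2 *
        ((q ε b x)⁻¹ * ((q ε c x)⁻¹) ^ 2 + ((q ε b x)⁻¹) ^ 2 * (q ε c x)⁻¹)
      ≤ 2 * ε⁻¹ ^ 4 * c4 ^ 2 * ((Kc ε B * v) * (Kc ε B * v) ^ 2 + (Kc ε B * v) ^ 2 * (Kc ε B * v)) := by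
        apply mul_le_mul_of_nonneg_left _ (by positivity)
        exact add_le_add t1 t2
    _ = 4 * ε⁻¹ ^ 4 * c4 ^ 2 * (Kc ε B) ^ 3 * v ^ 3 := by ring


/- ## chunk 5 : Green identity -/

def emap (i : Fin 4) : E4 ≃ᵐ ℝ × (Fin 3 → ℝ) :=
  (MeasurableEquiv.toLp 2 (Fin 4 → ℝ)).symm.trans
    (MeasurableEquiv.piFinSuccAbove (fun _ => ℝ) i)

lemma emap_mp (i : Fin 4) : MeasurePreserving (emap i) volume volume :=
  (volume_preserving_piFinSuccAbove (fun _ => ℝ) i).comp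
    (EuclideanSpace.volume_preserving_symm_measurableEquiv_toLp (Fin 4))

lemma emap_symm_apply (i : Fin 4) (z : ℝ × (Fin 3 → ℝ)) (j : Fin 4) :
    ((emap i).symm z) j = Fin.insertNth (α := fun _ => ℝ) i z.1 z.2 j := rfl

lemma emap_symm_eq (i : Fin 4) (s : ℝ) (y : Fin 3 → ℝ) :
    (emap i).symm (s, y) = (emap i).symm (0, y) + s • EuclideanSpace.single i (1:ℝ) := by
  refine PiLp.ext (fun j => ?_)
  have h1 : ((emap i).symm (0, y) + s • EuclideanSpace.single i (1:ℝ)) j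
      = ((emap i).symm (0, y)) j + s * (EuclideanSpace.single i (1:ℝ)) j := rfl
  rw [h1, emap_symm_apply, emap_symm_apply]
  by_cases hj : j = i
  · subst hj
    rw [Fin.insertNth_apply_same, Fin.insertNth_apply_same, EuclideanSpace.single_apply]
    simp
  · obtain ⟨k, hk⟩ := Fin.exists_succAbove_eq hj
    rw [← hk, Fin.insertNth_apply_succAbove, Fin.insertNth_apply_succAbove,
      EuclideanSpace.single_apply, if_neg (Fin.succAbove_ne i k)]
    ring

lemma hasDerivAt_line {F : E4 → ℝ} {A : E4 →L[ℝ] ℝ} (w d : E4) (s : ℝ)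
    (hF : HasFDerivAt F A (w + s • d)) : HasDerivAt (fun s : ℝ => F (w + s • d)) (A d) s := by
  have hγ : HasDerivAt (fun s : ℝ => w + s • d) d s := by
    simpa using ((hasDerivAt_id s).smul_const d).const_add w
  exact hF.comp_hasDerivAt s hγ

lemma tendsto_u_line {ε : ℝ} (hε : 0 < ε) (c w d : E4) (hd : ‖d‖ = 1) (l : Filter ℝ)
    (hl : Tendsto (fun s : ℝ => |s|) l atTop) :
    Tendsto (fun s : ℝ => u ε c (w + s • d)) l (𝓝 0) := by
  set K := ‖w - c‖ with hK
  have hq : Tendsto (fun s : ℝ => q ε c (w + s • d)) l atTop := by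
    have hlow : ∀ᶠ s in l, 1 + ε⁻¹ ^ 2 * (|s| - K) ^ 2 ≤ q ε c (w + s • d) := by
      filter_upwards [hl.eventually_ge_atTop K] with s hs
      have h1 : |s| - K ≤ ‖w + s • d - c‖ := by
        have h5 := norm_sub_norm_le (s • d) (-(w - c))
        rw [sub_neg_eq_add, norm_neg] at h5
        have h3 : ‖s • d‖ = |s| := by rw [norm_smul, hd, Real.norm_eq_abs, mul_one]
        have h4 : w + s • d - c = s • d + (w - c) := by abel
        rw [h4]
        linarith [h5, h3.le, h3.ge]
      have h2 : (|s| - K) ^ 2 ≤ ‖w + s • d - c‖ ^ 2 := by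
        apply pow_le_pow_left₀ (by linarith) h1
      unfold q
      have : (0:ℝ) < ε⁻¹ := by positivity
      nlinarith
    apply tendsto_atTop_mono' l hlow
    have h5 : Tendsto (fun s : ℝ => (|s| - K) ^ 2) l atTop := by
      have h6 : Tendsto (fun t : ℝ => (t - K) ^ 2) atTop atTop := by
        apply Tendsto.comp (tendsto_pow_atTop two_ne_zero)
        exact tendsto_atTop_add_const_right atTop (-K) tendsto_id
      exact h6.comp hl
    have h7 : Tendsto (fun s : ℝ => ε⁻¹ ^ 2 * (|s| - K) ^ 2) l atTop := by
      apply Tendsto.const_mul_atTop (by positivity) h5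
    exact tendsto_atTop_add_const_left l 1 h7
  have : Tendsto (fun s : ℝ => (q ε c (w + s • d))⁻¹) l (𝓝 0) := hq.inv_tendsto_atTop
  have h8 := this.const_mul (ε⁻¹ * c4)
  rw [mul_zero] at h8
  exact h8

lemma green_dir {ε : ℝ} (hε : 0 < ε) (b c : E4) (i : Fin 4) :
    ∫ x : E4, (du ε b i x * du ε c i x + ddu ε b i x * u ε c x) = 0 := by
  set e := EuclideanSpace.single i (1:ℝ) with he
  set T : E4 → ℝ := fun x => du ε b i x * du ε c i x + ddu ε b i x * u ε c x with hT
  have hTint : Integrable T := (int_dudu hε b c i).add (int_dduu hε b c i)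
  have mp := (emap_mp i).symm
  have hTz : Integrable (fun z : ℝ × (Fin 3 → ℝ) => T ((emap i).symm z)) := by
    have := (mp.integrable_comp_emb (emap i).symm.measurableEmbedding (g := T)).mpr hTint
    exact this
  have hTz' : Integrable (fun z : ℝ × (Fin 3 → ℝ) => T ((emap i).symm z))
      ((volume : Measure ℝ).prod (volume : Measure (Fin 3 → ℝ))) := by
    rwa [← Measure.volume_eq_prod]
  have hsec := hTz'.prod_left_ae
  have hzero : ∀ᵐ y : Fin 3 → ℝ, (∫ s : ℝ, T ((emap i).symm (s, y))) = 0 := by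
    filter_upwards [hsec] with y hy
    set w : E4 := (emap i).symm (0, y) with hw
    have hrw : ∀ s : ℝ, (emap i).symm (s, y) = w + s • e := fun s => emap_symm_eq i s y
    have hder : ∀ s : ℝ, HasDerivAt (fun s : ℝ => du ε b i (w + s • e) * u ε c (w + s • e))
        (T (w + s • e)) s := by
      intro s
      have h1 : HasDerivAt (fun s : ℝ => du ε b i (w + s • e)) (ddu ε b i (w + s • e)) s := by
        have := hasDerivAt_line w e s (hasFDerivAt_du ε b i (w + s • e))
        rwa [Ddu_apply_single] at this
      have h2 : HasDerivAt (fun s : ℝ => u ε c (w + s • e)) (du ε c i (w + s • e)) s := by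
        have := hasDerivAt_line w e s (hasFDerivAt_u ε c (w + s • e))
        rwa [Du_apply_single] at this
      have h3 := h1.mul h2
      refine h3.congr_deriv ?_
      simp only [hT]
      ring
    have hint : Integrable (fun s : ℝ => T (w + s • e)) := by
      apply hy.congr
      exact Filter.Eventually.of_forall (fun s => by
        show T ((emap i).symm (s, y)) = T (w + s • e)
        rw [hrw s])
    have hnorm_e : ‖e‖ = 1 := by rw [he, EuclideanSpace.norm_single, norm_one]
    have hsq : ∀ (l : Filter ℝ), Tendsto (fun s : ℝ => |s|) l atTop →
        Tendsto (fun s : ℝ => du ε b i (w + s • e) * u ε c (w + s • e)) l (𝓝 0) := by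
      intro l hl
      have hbnd : ∀ s : ℝ, ‖du ε b i (w + s • e) * u ε c (w + s • e)‖
          ≤ 2 * ε⁻¹ ^ 2 * c4 * u ε c (w + s • e) := by
        intro s
        rw [Real.norm_eq_abs, abs_mul]
        have h1 : |du ε b i (w + s • e)| ≤ 2 * ε⁻¹ ^ 2 * c4 := du_le_glob hε b i _
        have h2 : |u ε c (w + s • e)| = u ε c (w + s • e) := abs_of_nonneg (u_nonneg hε c _)
        rw [h2]
        apply mul_le_mul_of_nonneg_right h1 (u_nonneg hε c _)
      have hg0 : Tendsto (fun s : ℝ => 2 * ε⁻¹ ^ 2 * c4 * u ε c (w + s • e)) l (𝓝 0) := by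
        have := (tendsto_u_line hε c w e hnorm_e l hl).const_mul (2 * ε⁻¹ ^ 2 * c4)
        rwa [mul_zero] at this
      exact squeeze_zero_norm hbnd hg0
    have htop := hsq atTop tendsto_abs_atTop_atTop
    have hbot := hsq atBot tendsto_abs_atBot_atTop
    have key := MeasureTheory.integral_of_hasDerivAt_of_tendsto hder hint hbot htop
    calc ∫ s : ℝ, T ((emap i).symm (s, y)) = ∫ s : ℝ, T (w + s • e) := by
          apply integral_congr_ae
          exact Filter.Eventually.of_forall (fun s => by
            show T ((emap i).symm (s, y)) = T (w + s • e)
            rw [hrw s])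
      _ = 0 - 0 := key
      _ = 0 := by ring
  calc ∫ x : E4, T x = ∫ z : ℝ × (Fin 3 → ℝ), T ((emap i).symm z) :=
        (mp.integral_comp (emap i).symm.measurableEmbedding T).symm
    _ = ∫ y : Fin 3 → ℝ, ∫ s : ℝ, T ((emap i).symm (s, y)) := by
        rw [Measure.volume_eq_prod]
        exact integral_prod_symm _ hTz'
    _ = ∫ y : Fin 3 → ℝ, (0:ℝ) := integral_congr_ae hzero
    _ = 0 := integral_zero _ _


/- ## chunk 6 : Green identity full + symmetry -/

lemma inner_grad {ε : ℝ} (b c x : E4) :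
    ⟪gradient (u ε b) x, gradient (u ε c) x⟫ = ∑ i, du ε b i x * du ε c i x := by
  rw [gradient_u, gradient_u, real_inner_smul_left, real_inner_smul_right]
  rw [PiLp.inner_apply]
  simp only [RCLike.inner_apply, conj_trivial]
  rw [Finset.mul_sum, Finset.mul_sum]
  apply Finset.sum_congr rfl
  intro i _
  have h1 : (x - b) i = x i - b i := rfl
  have h2 : (x - c) i = x i - c i := rfl
  rw [h1, h2]
  unfold du
  ring

lemma green {ε : ℝ} (hε : 0 < ε) (b c : E4) :
    ∫ x : E4, ⟪gradient (u ε b) x, gradient (u ε c) x⟫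
      = S4 * ∫ x : E4, (u ε b x) ^ 3 * u ε c x := by
  calc ∫ x : E4, ⟪gradient (u ε b) x, gradient (u ε c) x⟫
      = ∫ x : E4, ∑ i, du ε b i x * du ε c i x := by
        apply integral_congr_ae
        exact Filter.Eventually.of_forall (fun x => inner_grad b c x)
    _ = ∑ i, ∫ x : E4, du ε b i x * du ε c i x :=
        integral_finset_sum _ (fun i _ => int_dudu hε b c i)
    _ = ∑ i : Fin 4, (0 - ∫ x : E4, ddu ε b i x * u ε c x) := by
        apply Finset.sum_congr rfl
        intro i _
        have hadd := integral_add (int_dudu hε b c i) (int_dduu hε b c i)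
        have h0 := green_dir hε b c i
        rw [hadd] at h0
        linarith
    _ = - ∑ i : Fin 4, ∫ x : E4, ddu ε b i x * u ε c x := by
        rw [← Finset.sum_neg_distrib]
        apply Finset.sum_congr rfl
        intro i _
        ring
    _ = - ∫ x : E4, ∑ i, ddu ε b i x * u ε c x := by
        rw [integral_finset_sum _ (fun i _ => int_dduu hε b c i)]
    _ = - ∫ x : E4, -S4 * ((u ε b x) ^ 3 * u ε c x) := by
        congr 1
        apply integral_congr_ae
        apply Filter.Eventually.of_forall
        intro x
        show ∑ i : Fin 4, ddu ε b i x * u ε c x = -S4 * (u ε b x ^ 3 * u ε c x)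
        rw [← Finset.sum_mul, sum_ddu hε b x]
        ring
    _ = S4 * ∫ x : E4, (u ε b x) ^ 3 * u ε c x := by
        rw [integral_const_mul]
        ring

lemma u_translate (ε : ℝ) (b x : E4) : u ε b x = u ε 0 (x - b) := by
  unfold u q
  rw [sub_zero]

lemma int_u4_const {ε : ℝ} (b : E4) :
    ∫ x : E4, (u ε b x) ^ 4 = ∫ x : E4, (u ε 0 x) ^ 4 := by
  calc ∫ x : E4, (u ε b x) ^ 4 = ∫ x : E4, (u ε 0 (x - b)) ^ 4 := by
        apply integral_congr_ae
        exact Filter.Eventually.of_forall (fun x => by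
          show u ε b x ^ 4 = u ε 0 (x - b) ^ 4
          rw [← u_translate])
    _ = ∫ x : E4, (u ε 0 x) ^ 4 := integral_sub_right_eq_self (fun x => (u ε 0 x) ^ 4) b

lemma u_neg (ε : ℝ) (b x : E4) : u ε b (-x) = u ε (-b) x := by
  unfold u q
  have h : ‖-x - b‖ = ‖x - -b‖ := by
    have h1 : -x - b = -(x - -b) := by abel
    rw [h1, norm_neg]
  rw [h]

lemma int_u3u_swap {ε : ℝ} (b : E4) :
    ∫ x : E4, (u ε b x) ^ 3 * u ε (-b) x = ∫ x : E4, (u ε (-b) x) ^ 3 * u ε b x := by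
  calc ∫ x : E4, (u ε b x) ^ 3 * u ε (-b) x
      = ∫ x : E4, (u ε (-b) (-x)) ^ 3 * u ε b (-x) := by
        apply integral_congr_ae
        apply Filter.Eventually.of_forall
        intro x
        show u ε b x ^ 3 * u ε (-b) x = u ε (-b) (-x) ^ 3 * u ε b (-x)
        rw [u_neg, u_neg, neg_neg]
    _ = ∫ x : E4, (u ε (-b) x) ^ 3 * u ε b x :=
        integral_neg_eq_self (fun x => (u ε (-b) x) ^ 3 * u ε b x) volume


/- ## chunk 7 : parametric derivatives -/

lemma S4_pos : 0 < S4 := by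
  have hc4 := c4_pos
  unfold S4
  positivity

lemma int_p4 {ε : ℝ} (hε : 0 < ε) (b : E4) : Integrable (fun x => u ε b x ^ 4) := by
  apply (int_u_pow hε b b 4 0 rfl).congr
  exact Filter.Eventually.of_forall (fun x => by simp)

lemma int_p31 {ε : ℝ} (hε : 0 < ε) (b c : E4) :
    Integrable (fun x => u ε b x ^ 3 * u ε c x) := by
  apply (int_u_pow hε b c 3 1 rfl).congr
  exact Filter.Eventually.of_forall (fun x => by simp)

lemma int_p22 {ε : ℝ} (hε : 0 < ε) (b c : E4) :
    Integrable (fun x => u ε b x ^ 2 * u ε c x ^ 2) :=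
  int_u_pow hε b c 2 2 rfl

lemma int_p13 {ε : ℝ} (hε : 0 < ε) (b c : E4) :
    Integrable (fun x => u ε b x * u ε c x ^ 3) := by
  apply (int_u_pow hε b c 1 3 rfl).congr
  exact Filter.Eventually.of_forall (fun x => by simp)

lemma norm_ae1 (a : ℝ) : ‖a • e1‖ = |a| := by
  rw [norm_smul, e1, EuclideanSpace.norm_single, norm_one, Real.norm_eq_abs, mul_one]

lemma q_ae1 (ε a : ℝ) (x : E4) :
    q ε (a • e1) x = 1 + ε⁻¹ ^ 2 * (‖x‖ ^ 2 - 2 * a * (x 0) + a ^ 2) := by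
  unfold q
  rw [norm_sub_sq_real]
  have h1 : ⟪x, a • e1⟫ = a * (x 0) := by
    rw [real_inner_smul_right]
    congr 1
    simp [e1, PiLp.inner_apply, EuclideanSpace.single_apply, mul_ite, Finset.sum_ite_eq]
  have h2 : ‖a • e1‖ ^ 2 = a ^ 2 := by
    rw [norm_ae1, sq_abs]
  rw [h1, h2]
  ring

lemma hasDerivAt_q_param (ε : ℝ) (x : E4) (a : ℝ) :
    HasDerivAt (fun a : ℝ => q ε (a • e1) x) (ε⁻¹ ^ 2 * (2 * a - 2 * (x 0))) a := by
  have hfe : (fun a : ℝ => q ε (a • e1) x)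
      = fun a => 1 + ε⁻¹ ^ 2 * (‖x‖ ^ 2 + ((-2 * (x 0)) * a + a ^ 2)) := by
    funext a
    rw [q_ae1]
    ring
  rw [hfe]
  have h1 : HasDerivAt (fun a : ℝ => (-2 * (x 0)) * a) (-2 * (x 0)) a := by
    simpa using (hasDerivAt_id a).const_mul (-2 * (x 0))
  have h2 : HasDerivAt (fun a : ℝ => a ^ 2) (2 * a ^ 1) a := hasDerivAt_pow 2 a
  have h3 := (((h1.add h2).const_add (‖x‖ ^ 2)).const_mul (ε⁻¹ ^ 2)).const_add 1
  refine h3.congr_deriv ?_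
  ring

def ua' (ε a : ℝ) (x : E4) : ℝ :=
  ε⁻¹ * c4 * (-(ε⁻¹ ^ 2 * (2 * a - 2 * (x 0))) / (q ε (a • e1) x) ^ 2)

lemma hasDerivAt_u_param (ε a : ℝ) (x : E4) :
    HasDerivAt (fun a : ℝ => u ε (a • e1) x) (ua' ε a x) a := by
  have h := ((hasDerivAt_q_param ε x a).inv (q_ne ε (a • e1) x)).const_mul (ε⁻¹ * c4)
  exact h

lemma hasDerivAt_u2_param (ε t : ℝ) (x : E4) :
    HasDerivAt (fun t : ℝ => u ε (-(t • e1)) x) (ua' ε (-t) x * (-1)) t := by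
  have h0 : (fun t : ℝ => u ε (-(t • e1)) x) = fun t : ℝ => u ε ((-t) • e1) x := by
    funext t
    rw [neg_smul]
  rw [h0]
  have hg := hasDerivAt_u_param ε (-t) x
  have hf : HasDerivAt (fun t : ℝ => -t) (-1) t := (hasDerivAt_id t).neg
  exact hg.comp t hf

lemma Wv_le_one {W : ℝ} (hW : 1 ≤ W) : W * (W ^ 2)⁻¹ ≤ 1 := by
  have hW0 : (0:ℝ) < W := lt_of_lt_of_le one_pos hW
  have h1 : W * (W ^ 2)⁻¹ = W⁻¹ := by
    field_simp
  rw [h1]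
  exact inv_le_one_of_one_le₀ hW

lemma ua'_le {ε B : ℝ} (hε : 0 < ε) {a : ℝ} (ha : |a| ≤ B) (x : E4) :
    |ua' ε a x| ≤ (2 * ε⁻¹ ^ 3 * c4 * (1 + B) * (Kc ε B) ^ 2) * ((1 + ‖x‖) ^ 2)⁻¹ := by
  have hc4 := c4_pos
  have hK := Kc_pos ε B
  have hq := q_pos ε (a • e1) x
  have hB : 0 ≤ B := le_trans (abs_nonneg a) ha
  have hbB : ‖a • e1‖ ≤ B := by rw [norm_ae1]; exact ha
  set W := 1 + ‖x‖ with hWdef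
  have hW : 1 ≤ W := by simp [hWdef, norm_nonneg]
  have hW0 : (0:ℝ) < W := lt_of_lt_of_le one_pos hW
  set v := (W ^ 2)⁻¹ with hvdef
  have hv0 : (0:ℝ) < v := by positivity
  have habs : |ua' ε a x| = ε⁻¹ * c4 * (|2 * a - 2 * (x 0)| * ε⁻¹ ^ 2 * ((q ε (a • e1) x)⁻¹) ^ 2) := by
    unfold ua'
    simp only [abs_mul, abs_div, abs_neg, abs_pow, abs_inv]
    rw [abs_of_pos hε, abs_of_pos hc4, abs_of_pos hq]
    rw [div_eq_mul_inv, ← inv_pow]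
    ring
  rw [habs]
  have h1 : |2 * a - 2 * (x 0)| ≤ 2 * (1 + B) * W := by
    have h2 := abs_coord_le x 0
    have h3 : |2 * a - 2 * (x 0)| ≤ 2 * |a| + 2 * |x 0| := by
      calc |2 * a - 2 * (x 0)| ≤ |2 * a| + |2 * (x 0)| := abs_sub _ _
        _ = 2 * |a| + 2 * |x 0| := by rw [abs_mul, abs_mul]; norm_num
    have h4 : ‖x‖ ≤ W := by simp [hWdef]
    nlinarith [abs_nonneg (x 0), abs_nonneg a]
  have h5 : ((q ε (a • e1) x)⁻¹) ^ 2 ≤ (Kc ε B * v) ^ 2 :=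
    pow_le_pow_left₀ (by positivity) (q_inv_le hε hbB x) 2
  calc ε⁻¹ * c4 * (|2 * a - 2 * (x 0)| * ε⁻¹ ^ 2 * ((q ε (a • e1) x)⁻¹) ^ 2)
      ≤ ε⁻¹ * c4 * ((2 * (1 + B) * W) * ε⁻¹ ^ 2 * (Kc ε B * v) ^ 2) := by
        apply mul_le_mul_of_nonneg_left _ (by positivity)
        apply mul_le_mul _ h5 (by positivity) (by positivity)
        apply mul_le_mul_of_nonneg_right h1 (by positivity)
    _ = (2 * ε⁻¹ ^ 3 * c4 * (1 + B) * (Kc ε B) ^ 2) * v * (W * v) := by ring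
    _ ≤ (2 * ε⁻¹ ^ 3 * c4 * (1 + B) * (Kc ε B) ^ 2) * v * 1 := by
        apply mul_le_mul_of_nonneg_left (Wv_le_one hW) (by positivity)
    _ = (2 * ε⁻¹ ^ 3 * c4 * (1 + B) * (Kc ε B) ^ 2) * v := by ring

lemma cont_ua' (ε a : ℝ) : Continuous (fun x : E4 => ua' ε a x) := by
  unfold ua'
  apply Continuous.mul continuous_const
  apply Continuous.div
  · apply Continuous.neg
    apply Continuous.mul continuous_const
    exact (continuous_const.sub (continuous_const.mul
      ((EuclideanSpace.proj (𝕜 := ℝ) (0 : Fin 4)).continuous)))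
  · exact (cont_q ε (a • e1)).pow 2
  · exact fun x => pow_ne_zero _ (q_ne ε (a • e1) x)

/- ## chunk 8 : derivative integrands -/

def Fc' (ε t : ℝ) (x : E4) : ℝ :=
  2 * u ε (t • e1) x ^ 1 * ua' ε t x * u ε (-(t • e1)) x ^ 2
  + u ε (t • e1) x ^ 2 * (2 * u ε (-(t • e1)) x ^ 1 * (ua' ε (-t) x * -1))

def Fa' (ε t : ℝ) (x : E4) : ℝ :=
  3 * u ε (t • e1) x ^ 2 * ua' ε t x * u ε (-(t • e1)) x
  + u ε (t • e1) x ^ 3 * (ua' ε (-t) x * -1)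

lemma hasDerivAt_Fc (ε t : ℝ) (x : E4) :
    HasDerivAt (fun t : ℝ => u ε (t • e1) x ^ 2 * u ε (-(t • e1)) x ^ 2) (Fc' ε t x) t := by
  have h := ((hasDerivAt_u_param ε t x).fun_pow 2).fun_mul ((hasDerivAt_u2_param ε t x).fun_pow 2)
  refine h.congr_deriv ?_
  all_goals (unfold Fc'; push_cast; ring)

lemma hasDerivAt_Fa (ε t : ℝ) (x : E4) :
    HasDerivAt (fun t : ℝ => u ε (t • e1) x ^ 3 * u ε (-(t • e1)) x) (Fa' ε t x) t := by
  have h := ((hasDerivAt_u_param ε t x).fun_pow 3).fun_mul (hasDerivAt_u2_param ε t x)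
  refine h.congr_deriv ?_
  all_goals (unfold Fa'; push_cast; ring)

def CB (ε B : ℝ) : ℝ :=
  4 * (ε⁻¹ * c4) * (ε⁻¹ * c4 * Kc ε B) ^ 2 * (2 * ε⁻¹ ^ 3 * c4 * (1 + B) * (Kc ε B) ^ 2)

lemma Fc'_le {ε B : ℝ} (hε : 0 < ε) {t : ℝ} (ht : |t| ≤ B) (x : E4) :
    |Fc' ε t x| ≤ CB ε B * (((1 + ‖x‖) ^ 2)⁻¹) ^ 3 := by
  have hc4 := c4_pos
  have hK := Kc_pos ε B
  have hB : 0 ≤ B := le_trans (abs_nonneg t) ht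
  set v := ((1 + ‖x‖) ^ 2)⁻¹ with hv
  have hv0 : (0:ℝ) < v := by positivity
  have h0u1 : 0 ≤ u ε (t • e1) x := u_nonneg hε _ x
  have h0u2 : 0 ≤ u ε (-(t • e1)) x := u_nonneg hε _ x
  have hb1 : ‖t • e1‖ ≤ B := by rw [norm_ae1]; exact ht
  have hb2 : ‖-(t • e1)‖ ≤ B := by rw [norm_neg, norm_ae1]; exact ht
  have hk1 : u ε (t • e1) x ≤ ε⁻¹ * c4 * Kc ε B * v := u_le hε hb1 x
  have hk2 : u ε (-(t • e1)) x ≤ ε⁻¹ * c4 * Kc ε B * v := u_le hε hb2 x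
  have hg1 : u ε (t • e1) x ≤ ε⁻¹ * c4 := u_le_glob hε _ x
  have hg2 : u ε (-(t • e1)) x ≤ ε⁻¹ * c4 := u_le_glob hε _ x
  have hd1 : |ua' ε t x| ≤ 2 * ε⁻¹ ^ 3 * c4 * (1 + B) * (Kc ε B) ^ 2 * v := ua'_le hε ht x
  have hd2 : |ua' ε (-t) x| ≤ 2 * ε⁻¹ ^ 3 * c4 * (1 + B) * (Kc ε B) ^ 2 * v :=
    ua'_le hε (by rwa [abs_neg]) x
  have e : |Fc' ε t x| ≤ 2 * u ε (t • e1) x * |ua' ε t x| * u ε (-(t • e1)) x ^ 2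
      + u ε (t • e1) x ^ 2 * (2 * u ε (-(t • e1)) x * |ua' ε (-t) x|) := by
    unfold Fc'
    refine le_trans (abs_add_le _ _) (le_of_eq ?_)
    simp only [abs_mul, abs_pow, abs_neg, abs_one, abs_two, pow_one, mul_one]
    rw [abs_of_nonneg h0u1, abs_of_nonneg h0u2]
    try ring
  refine le_trans e ?_
  have hsq2 : u ε (-(t • e1)) x ^ 2 ≤ (ε⁻¹ * c4) * (ε⁻¹ * c4 * Kc ε B * v) := by
    rw [sq]
    exact mul_le_mul hg2 hk2 h0u2 (by positivity)
  have hsq1 : u ε (t • e1) x ^ 2 ≤ (ε⁻¹ * c4) * (ε⁻¹ * c4 * Kc ε B * v) := by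
    rw [sq]
    exact mul_le_mul hg1 hk1 h0u1 (by positivity)
  have ht1 : 2 * u ε (t • e1) x * |ua' ε t x| * u ε (-(t • e1)) x ^ 2
      ≤ 2 * (ε⁻¹ * c4 * Kc ε B * v) * (2 * ε⁻¹ ^ 3 * c4 * (1 + B) * (Kc ε B) ^ 2 * v)
        * ((ε⁻¹ * c4) * (ε⁻¹ * c4 * Kc ε B * v)) :=
    mul_le_mul4 (le_refl 2) hk1 hd1 hsq2 (by norm_num) h0u1 (abs_nonneg _) (by positivity)
      (by positivity) (by positivity)
  have hinner : 2 * u ε (-(t • e1)) x * |ua' ε (-t) x|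
      ≤ 2 * (ε⁻¹ * c4 * Kc ε B * v) * (2 * ε⁻¹ ^ 3 * c4 * (1 + B) * (Kc ε B) ^ 2 * v) := by
    have h1 : 2 * u ε (-(t • e1)) x ≤ 2 * (ε⁻¹ * c4 * Kc ε B * v) :=
      mul_le_mul_of_nonneg_left hk2 (by norm_num)
    exact mul_le_mul h1 hd2 (abs_nonneg _) (by positivity)
  have ht2 : u ε (t • e1) x ^ 2 * (2 * u ε (-(t • e1)) x * |ua' ε (-t) x|)
      ≤ ((ε⁻¹ * c4) * (ε⁻¹ * c4 * Kc ε B * v))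
        * (2 * (ε⁻¹ * c4 * Kc ε B * v) * (2 * ε⁻¹ ^ 3 * c4 * (1 + B) * (Kc ε B) ^ 2 * v)) :=
    mul_le_mul hsq1 hinner (by positivity) (by positivity)
  refine le_trans (add_le_add ht1 ht2) (le_of_eq ?_)
  unfold CB
  ring

lemma Fa'_le {ε B : ℝ} (hε : 0 < ε) {t : ℝ} (ht : |t| ≤ B) (x : E4) :
    |Fa' ε t x| ≤ CB ε B * (((1 + ‖x‖) ^ 2)⁻¹) ^ 3 := by
  have hc4 := c4_pos
  have hK := Kc_pos ε B
  have hB : 0 ≤ B := le_trans (abs_nonneg t) ht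
  set v := ((1 + ‖x‖) ^ 2)⁻¹ with hv
  have hv0 : (0:ℝ) < v := by positivity
  have h0u1 : 0 ≤ u ε (t • e1) x := u_nonneg hε _ x
  have h0u2 : 0 ≤ u ε (-(t • e1)) x := u_nonneg hε _ x
  have hb1 : ‖t • e1‖ ≤ B := by rw [norm_ae1]; exact ht
  have hb2 : ‖-(t • e1)‖ ≤ B := by rw [norm_neg, norm_ae1]; exact ht
  have hk1 : u ε (t • e1) x ≤ ε⁻¹ * c4 * Kc ε B * v := u_le hε hb1 x
  have hk2 : u ε (-(t • e1)) x ≤ ε⁻¹ * c4 * Kc ε B * v := u_le hε hb2 x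
  have hg1 : u ε (t • e1) x ≤ ε⁻¹ * c4 := u_le_glob hε _ x
  have hd1 : |ua' ε t x| ≤ 2 * ε⁻¹ ^ 3 * c4 * (1 + B) * (Kc ε B) ^ 2 * v := ua'_le hε ht x
  have hd2 : |ua' ε (-t) x| ≤ 2 * ε⁻¹ ^ 3 * c4 * (1 + B) * (Kc ε B) ^ 2 * v :=
    ua'_le hε (by rwa [abs_neg]) x
  have e : |Fa' ε t x| ≤ 3 * u ε (t • e1) x ^ 2 * |ua' ε t x| * u ε (-(t • e1)) x
      + u ε (t • e1) x ^ 3 * |ua' ε (-t) x| := by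
    unfold Fa'
    refine le_trans (abs_add_le _ _) (le_of_eq ?_)
    simp only [abs_mul, abs_pow, abs_neg, abs_one, mul_one]
    rw [abs_of_nonneg h0u1, abs_of_nonneg h0u2]
    congr 2
    · rw [abs_of_nonneg (by norm_num : (0:ℝ) ≤ 3)]
  refine le_trans e ?_
  have hsq1 : u ε (t • e1) x ^ 2 ≤ (ε⁻¹ * c4) * (ε⁻¹ * c4 * Kc ε B * v) := by
    rw [sq]
    exact mul_le_mul hg1 hk1 h0u1 (by positivity)
  have hcu1 : u ε (t • e1) x ^ 3 ≤ (ε⁻¹ * c4) * (ε⁻¹ * c4 * Kc ε B * v) * (ε⁻¹ * c4 * Kc ε B * v) := by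
    have : u ε (t • e1) x ^ 3 = u ε (t • e1) x ^ 2 * u ε (t • e1) x := by ring
    rw [this]
    exact mul_le_mul hsq1 hk1 h0u1 (by positivity)
  have ht1 : 3 * u ε (t • e1) x ^ 2 * |ua' ε t x| * u ε (-(t • e1)) x
      ≤ 3 * ((ε⁻¹ * c4) * (ε⁻¹ * c4 * Kc ε B * v))
        * (2 * ε⁻¹ ^ 3 * c4 * (1 + B) * (Kc ε B) ^ 2 * v) * (ε⁻¹ * c4 * Kc ε B * v) :=
    mul_le_mul4 (le_refl 3) hsq1 hd1 hk2 (by norm_num) (by positivity) (abs_nonneg _) h0u2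
      (by positivity) (by positivity)
  have ht2 : u ε (t • e1) x ^ 3 * |ua' ε (-t) x|
      ≤ ((ε⁻¹ * c4) * (ε⁻¹ * c4 * Kc ε B * v) * (ε⁻¹ * c4 * Kc ε B * v))
        * (2 * ε⁻¹ ^ 3 * c4 * (1 + B) * (Kc ε B) ^ 2 * v) :=
    mul_le_mul hcu1 hd2 (abs_nonneg _) (by positivity)
  refine le_trans (add_le_add ht1 ht2) (le_of_eq ?_)
  unfold CB
  ring

lemma cont_Fc' (ε t : ℝ) : Continuous (fun x : E4 => Fc' ε t x) := by
  unfold Fc'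
  apply Continuous.add
  · exact ((continuous_const.mul ((cont_u ε _).pow 1)).mul (cont_ua' ε t)).mul
      ((cont_u ε _).pow 2)
  · exact ((cont_u ε _).pow 2).mul ((continuous_const.mul ((cont_u ε _).pow 1)).mul
      ((cont_ua' ε (-t)).mul continuous_const))

lemma cont_Fa' (ε t : ℝ) : Continuous (fun x : E4 => Fa' ε t x) := by
  unfold Fa'
  apply Continuous.add
  · exact ((continuous_const.mul ((cont_u ε _).pow 2)).mul (cont_ua' ε t)).mul (cont_u ε _)
  · exact ((cont_u ε _).pow 3).mul ((cont_ua' ε (-t)).mul continuous_const)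

lemma abs_le_of_ball {t t₀ : ℝ} (ht : t ∈ ball t₀ 1) : |t| ≤ |t₀| + 1 := by
  rw [mem_ball, Real.dist_eq] at ht
  calc |t| = |(t - t₀) + t₀| := by ring_nf
    _ ≤ |t - t₀| + |t₀| := abs_add_le _ _
    _ ≤ |t₀| + 1 := by linarith

lemma hasDerivAt_Cint {ε : ℝ} (hε : 0 < ε) (t₀ : ℝ) :
    HasDerivAt (fun t : ℝ => ∫ x : E4, u ε (t • e1) x ^ 2 * u ε (-(t • e1)) x ^ 2)
      (∫ x : E4, Fc' ε t₀ x) t₀ := by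
  have key := hasDerivAt_integral_of_dominated_loc_of_deriv_le (μ := volume)
    (F := fun (t : ℝ) (x : E4) => u ε (t • e1) x ^ 2 * u ε (-(t • e1)) x ^ 2)
    (F' := fun (t : ℝ) (x : E4) => Fc' ε t x)
    (x₀ := t₀) (bound := fun x : E4 => CB ε (|t₀| + 1) * (((1 + ‖x‖) ^ 2)⁻¹) ^ 3)
    (ball_mem_nhds t₀ one_pos)
    (Filter.Eventually.of_forall (fun t =>
      (((cont_u ε _).pow 2).mul ((cont_u ε _).pow 2)).aestronglyMeasurable))
    (int_p22 hε _ _)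
    ((cont_Fc' ε t₀).aestronglyMeasurable)
    (Filter.Eventually.of_forall (fun x => fun t ht => by
      rw [Real.norm_eq_abs]
      exact Fc'_le hε (abs_le_of_ball ht) x))
    (int_decay_fn _)
    (Filter.Eventually.of_forall (fun x => fun t _ => hasDerivAt_Fc ε t x))
  exact key.2

lemma hasDerivAt_Aint {ε : ℝ} (hε : 0 < ε) (t₀ : ℝ) :
    HasDerivAt (fun t : ℝ => ∫ x : E4, u ε (t • e1) x ^ 3 * u ε (-(t • e1)) x)
      (∫ x : E4, Fa' ε t₀ x) t₀ := by
  have key := hasDerivAt_integral_of_dominated_loc_of_deriv_le (μ := volume)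
    (F := fun (t : ℝ) (x : E4) => u ε (t • e1) x ^ 3 * u ε (-(t • e1)) x)
    (F' := fun (t : ℝ) (x : E4) => Fa' ε t x)
    (x₀ := t₀) (bound := fun x : E4 => CB ε (|t₀| + 1) * (((1 + ‖x‖) ^ 2)⁻¹) ^ 3)
    (ball_mem_nhds t₀ one_pos)
    (Filter.Eventually.of_forall (fun t =>
      (((cont_u ε _).pow 3).mul (cont_u ε _)).aestronglyMeasurable))
    (int_p31 hε _ _)
    ((cont_Fa' ε t₀).aestronglyMeasurable)
    (Filter.Eventually.of_forall (fun x => fun t ht => by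
      rw [Real.norm_eq_abs]
      exact Fa'_le hε (abs_le_of_ball ht) x))
    (int_decay_fn _)
    (Filter.Eventually.of_forall (fun x => fun t _ => hasDerivAt_Fa ε t x))
  exact key.2

end Agh


open Agh in
/-- For every `ε > 0`, the functions `N`, `G`, `C` are differentiable at every `t > 0`
and satisfy `N'(t) = (8/S₄) G'(t) + 6 C'(t)`. -/
theorem stmt5 (ε : ℝ) (hε : 0 < ε) :
    ∀ t : ℝ, 0 < t →
      DifferentiableAt ℝ (Nfun ε) t ∧ DifferentiableAt ℝ (Gfun ε) t ∧
      DifferentiableAt ℝ (Cfun ε) t ∧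
      deriv (Nfun ε) t = (8 / S4) * deriv (Gfun ε) t + 6 * deriv (Cfun ε) t := by
  intro t _
  have hCfun : Cfun ε = fun s : ℝ => ∫ x : E4, u ε (s • e1) x ^ 2 * u ε (-(s • e1)) x ^ 2 := by
    funext s
    unfold Cfun
    rw [u_eq_Ueps hε, u_eq_Ueps hε]
  have hC := hasDerivAt_Cint hε t
  have hCD : HasDerivAt (Cfun ε) (∫ x : E4, Fc' ε t x) t := by
    rw [hCfun]; exact hC
  have hA := hasDerivAt_Aint hε t
  have hGfun : Gfun ε = fun s : ℝ => S4 * ∫ x : E4, u ε (s • e1) x ^ 3 * u ε (-(s • e1)) x := by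
    funext s
    unfold Gfun
    rw [u_eq_Ueps hε, u_eq_Ueps hε]
    exact green hε _ _
  have hGD : HasDerivAt (Gfun ε) (S4 * ∫ x : E4, Fa' ε t x) t := by
    rw [hGfun]; exact hA.const_mul S4
  have hNfun : Nfun ε = fun s : ℝ => (2 * ∫ x : E4, (u ε 0 x) ^ 4)
      + (8 * (∫ x : E4, u ε (s • e1) x ^ 3 * u ε (-(s • e1)) x)
        + 6 * ∫ x : E4, u ε (s • e1) x ^ 2 * u ε (-(s • e1)) x ^ 2) := by
    funext s
    unfold Nfun Uhat
    rw [u_eq_Ueps hε, u_eq_Ueps hε]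
    set b := s • e1 with hb
    have hexp : (fun x : E4 => (u ε b x + u ε (-b) x) ^ 4)
        = fun x : E4 => u ε b x ^ 4 + (4 * (u ε b x ^ 3 * u ε (-b) x)
          + (6 * (u ε b x ^ 2 * u ε (-b) x ^ 2)
          + (4 * (u ε b x * u ε (-b) x ^ 3) + u ε (-b) x ^ 4))) := by
      funext x; ring
    rw [hexp]
    have i1 := int_p4 hε b
    have i2 := (int_p31 hε b (-b)).const_mul (4:ℝ)
    have i3 := (int_p22 hε b (-b)).const_mul (6:ℝ)
    have i4 := (int_p13 hε b (-b)).const_mul (4:ℝ)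
    have i5 := int_p4 hε (-b)
    have i45 : Integrable (fun x : E4 => 4 * (u ε b x * u ε (-b) x ^ 3) + u ε (-b) x ^ 4) :=
      i4.add i5
    have i345 : Integrable (fun x : E4 => 6 * (u ε b x ^ 2 * u ε (-b) x ^ 2)
        + (4 * (u ε b x * u ε (-b) x ^ 3) + u ε (-b) x ^ 4)) := i3.add i45
    have i2345 : Integrable (fun x : E4 => 4 * (u ε b x ^ 3 * u ε (-b) x)
        + (6 * (u ε b x ^ 2 * u ε (-b) x ^ 2)
          + (4 * (u ε b x * u ε (-b) x ^ 3) + u ε (-b) x ^ 4))) := i2.add i345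
    rw [integral_add i1 i2345, integral_add i2 i345, integral_add i3 i45, integral_add i4 i5]
    rw [integral_const_mul, integral_const_mul, integral_const_mul]
    rw [int_u4_const b, int_u4_const (-b)]
    have hswap : ∫ x : E4, u ε b x * u ε (-b) x ^ 3 = ∫ x : E4, u ε b x ^ 3 * u ε (-b) x := by
      calc ∫ x : E4, u ε b x * u ε (-b) x ^ 3 = ∫ x : E4, u ε (-b) x ^ 3 * u ε b x := by
            apply integral_congr_ae
            apply Filter.Eventually.of_forall
            intro x
            show u ε b x * u ε (-b) x ^ 3 = u ε (-b) x ^ 3 * u ε b x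
            ring
        _ = ∫ x : E4, u ε b x ^ 3 * u ε (-b) x := (int_u3u_swap b).symm
    rw [hswap]
    ring
  have hND : HasDerivAt (Nfun ε)
      (8 * (∫ x : E4, Fa' ε t x) + 6 * ∫ x : E4, Fc' ε t x) t := by
    rw [hNfun]
    exact ((hA.const_mul (8:ℝ)).add (hC.const_mul (6:ℝ))).const_add _
  refine ⟨hND.differentiableAt, hGD.differentiableAt, hCD.differentiableAt, ?_⟩
  rw [hND.deriv, hGD.deriv, hCD.deriv]
  have hS4 : S4 ≠ 0 := S4_pos.ne'
  field_simp
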